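/- The Banach space c of convergent scalar sequences (equivalently, the space C(ℕ∞, ℝ) of continuous real-valued functions on the one-point compactification of ℕ with the supremum norm) is not locally 1-injective: there exist a finite-dimensional Banach space B, a subspace A ⊆ B, and a linear operator t : A → c that admits no linear extension T : B → c with ‖T‖ = ‖t‖. -/

import Mathlib

open Filter Real OnePoint

universe u

/-- A bundled Banach space over `ℝ`. -/
structure BanachSpace : Type (u + 1) where
  carrier : Type u
  [norm : NormedAddCommGroup carrier]
  [space : NormedSpace ℝ carrier]
  [complete : CompleteSpace carrier]

attribute [instance] BanachSpace.norm BanachSpace.space BanachSpace.complete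

instance : CoeSort BanachSpace.{u} (Type u) := ⟨BanachSpace.carrier⟩

namespace LocInjC

noncomputable section

/-- angles -/
def th (n : ℕ) : ℝ := 1 / (n + 1)

def w (n : ℕ) : ℝ := (-1) ^ n

lemma th_pos (n : ℕ) : 0 < th n := by rw [th]; positivity

lemma th_le_one (n : ℕ) : th n ≤ 1 := by
  rw [th]
  apply div_le_one_of_le₀ <;> [skip; positivity]
  simp

lemma w_abs (n : ℕ) : |w n| = 1 := by
  rw [w, abs_pow, abs_neg, abs_one, one_pow]

/-- The carrier of the finite-dimensional space `B`. -/
def Bc : Type := Fin 3 → ℝ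

instance : AddCommGroup Bc := inferInstanceAs (AddCommGroup (Fin 3 → ℝ))
instance : Module ℝ Bc := inferInstanceAs (Module ℝ (Fin 3 → ℝ))

/-- identity linear equiv to coordinates -/
def ee : Bc ≃ₗ[ℝ] (Fin 3 → ℝ) :=
  { toFun := fun x => x, invFun := fun x => x,
    map_add' := fun _ _ => rfl, map_smul' := fun _ _ => rfl,
    left_inv := fun _ => rfl, right_inv := fun _ => rfl }

/-- coordinates of the embedding into `ℓ∞` -/
def p (x : Bc) : ℕ → ℝ := fun k =>
  match k with
  | 0 => ee x 0 + ee x 2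
  | 1 => ee x 0 - ee x 2
  | (m+2) => ee x 0 * Real.cos (th m) + ee x 1 * Real.sin (th m) + w m * ee x 2

lemma p_bound (x : Bc) (k : ℕ) : ‖p x k‖ ≤ |ee x 0| + |ee x 1| + |ee x 2| := by
  have h0 := abs_cos_le_one (th (k - 2))
  have h1 := abs_sin_le_one (th (k - 2))
  match k with
  | 0 => simp only [p, Real.norm_eq_abs]
         have := abs_add_le (ee x 0) (ee x 2)
         have := abs_nonneg (ee x 1); linarith
  | 1 => simp only [p, Real.norm_eq_abs]
         have := abs_sub (ee x 0) (ee x 2)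
         have := abs_nonneg (ee x 1); linarith
  | (m+2) =>
      simp only [p, Real.norm_eq_abs]
      have e0 : |ee x 0 * Real.cos (th m)| ≤ |ee x 0| := by
        rw [abs_mul]
        nlinarith [abs_nonneg (ee x 0), abs_cos_le_one (th m), abs_nonneg (Real.cos (th m))]
      have e1 : |ee x 1 * Real.sin (th m)| ≤ |ee x 1| := by
        rw [abs_mul]
        nlinarith [abs_nonneg (ee x 1), abs_sin_le_one (th m), abs_nonneg (Real.sin (th m))]
      have e2 : |w m * ee x 2| ≤ |ee x 2| := by
        rw [abs_mul, w_abs, one_mul]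
      calc |ee x 0 * Real.cos (th m) + ee x 1 * Real.sin (th m) + w m * ee x 2|
          ≤ |ee x 0 * Real.cos (th m) + ee x 1 * Real.sin (th m)| + |w m * ee x 2| := abs_add_le _ _
        _ ≤ |ee x 0 * Real.cos (th m)| + |ee x 1 * Real.sin (th m)| + |w m * ee x 2| := by
            have := abs_add_le (ee x 0 * Real.cos (th m)) (ee x 1 * Real.sin (th m)); linarith
        _ ≤ _ := by linarith

/-- the isometric embedding of `B` into bounded sequences. -/
def phi : Bc →ₗ[ℝ] (BoundedContinuousFunction ℕ ℝ) where
  toFun x := BoundedContinuousFunction.ofNormedAddCommGroupDiscrete (p x)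
      (|ee x 0| + |ee x 1| + |ee x 2|) (p_bound x)
  map_add' x y := by
    ext k
    simp only [BoundedContinuousFunction.coe_ofNormedAddCommGroupDiscrete,
      BoundedContinuousFunction.coe_add, Pi.add_apply]
    match k with
    | 0 => simp only [p, map_add, Pi.add_apply]; ring
    | 1 => simp only [p, map_add, Pi.add_apply]; ring
    | (m+2) => simp only [p, map_add, Pi.add_apply]; ring
  map_smul' c x := by
    ext k
    simp only [BoundedContinuousFunction.coe_ofNormedAddCommGroupDiscrete,
      BoundedContinuousFunction.coe_smul, Pi.smul_apply, RingHom.id_apply, smul_eq_mul]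
    match k with
    | 0 => simp only [p, _root_.map_smul, Pi.smul_apply, smul_eq_mul]; ring
    | 1 => simp only [p, _root_.map_smul, Pi.smul_apply, smul_eq_mul]; ring
    | (m+2) => simp only [p, _root_.map_smul, Pi.smul_apply, smul_eq_mul]; ring

lemma phi_apply (x : Bc) (k : ℕ) : phi x k = p x k := rfl

lemma sin_one_pos : 0 < Real.sin 1 :=
  Real.sin_pos_of_pos_of_lt_pi one_pos (by linarith [Real.pi_gt_three])

lemma phi_inj : Function.Injective phi := by
  rw [injective_iff_map_eq_zero]
  intro x hx
  have h0 : p x 0 = 0 := by rw [← phi_apply, hx]; rfl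
  have h1 : p x 1 = 0 := by rw [← phi_apply, hx]; rfl
  have h2 : p x 2 = 0 := by rw [← phi_apply, hx]; rfl
  simp only [p] at h0 h1 h2
  have c0 : ee x 0 = 0 := by linarith
  have c2 : ee x 2 = 0 := by linarith
  have c1 : ee x 1 = 0 := by
    have hw : w 0 = 1 := by simp [w]
    rw [hw, c0, c2] at h2
    have := sin_one_pos
    have hth : th 0 = 1 := by norm_num [th]
    rw [hth] at h2
    simp only [zero_mul, zero_add, mul_one, add_zero] at h2
    nlinarith [sin_one_pos]
  have : ee x = 0 := by
    funext i
    fin_cases i <;> simp [c0, c1, c2]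
  exact ee.map_eq_zero_iff.mp this

instance : NormedAddCommGroup Bc := NormedAddCommGroup.induced Bc (BoundedContinuousFunction ℕ ℝ) phi phi_inj

instance : NormedSpace ℝ Bc := NormedSpace.induced ℝ Bc (BoundedContinuousFunction ℕ ℝ) phi

lemma norm_def (x : Bc) : ‖x‖ = ‖phi x‖ := rfl

instance : FiniteDimensional ℝ Bc := Module.Finite.equiv ee.symm

instance : CompleteSpace Bc := FiniteDimensional.complete ℝ Bc

/-- `F` extends `cos (th n)` continuously with value `1` at infinity. -/
def F : C(OnePoint ℕ, ℝ) :=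
  OnePoint.continuousMapMkNat (fun n => Real.cos (th n)) 1 (by
    have h : Filter.Tendsto th atTop (nhds 0) := by
      unfold th; simpa [one_div] using tendsto_one_div_add_atTop_nhds_zero_nat (𝕜 := ℝ)
    simpa [Function.comp_def] using (Real.continuous_cos.continuousAt (x := (0:ℝ))).tendsto.comp h)

def H : C(OnePoint ℕ, ℝ) :=
  OnePoint.continuousMapMkNat (fun n => Real.sin (th n)) 0 (by
    have h : Filter.Tendsto th atTop (nhds 0) := by
      unfold th; simpa [one_div] using tendsto_one_div_add_atTop_nhds_zero_nat (𝕜 := ℝ)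
    simpa [Function.comp_def] using (Real.continuous_sin.continuousAt (x := (0:ℝ))).tendsto.comp h)

@[simp] lemma F_coe (n : ℕ) : F (n : OnePoint ℕ) = Real.cos (th n) := rfl
@[simp] lemma H_coe (n : ℕ) : H (n : OnePoint ℕ) = Real.sin (th n) := rfl
@[simp] lemma F_infty : F ∞ = 1 := rfl
@[simp] lemma H_infty : H ∞ = 0 := rfl

/-- the subspace `A = {x : x₂ = 0}`. -/
def A : Submodule ℝ Bc :=
  LinearMap.ker ((LinearMap.proj 2 : (Fin 3 → ℝ) →ₗ[ℝ] ℝ) ∘ₗ ee.toLinearMap)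

lemma mem_A {x : Bc} : x ∈ A ↔ ee x 2 = 0 := Iff.rfl

/-- the operator `t : A → C(ℕ∞, ℝ)`. -/
def tlin : A →ₗ[ℝ] C(OnePoint ℕ, ℝ) where
  toFun a := (ee (a : Bc) 0) • F + (ee (a : Bc) 1) • H
  map_add' a b := by
    simp only [Submodule.coe_add, map_add, Pi.add_apply, add_smul]
    abel
  map_smul' c a := by
    simp only [Submodule.coe_smul, _root_.map_smul, Pi.smul_apply, RingHom.id_apply, smul_eq_mul,
      mul_smul, smul_add]

def t : A →L[ℝ] C(OnePoint ℕ, ℝ) := LinearMap.toContinuousLinearMap tlin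

lemma t_apply_coe (a : A) (n : ℕ) :
    t a (n : OnePoint ℕ) = ee (a : Bc) 0 * Real.cos (th n) + ee (a : Bc) 1 * Real.sin (th n) := by
  simp [t, tlin, LinearMap.coe_toContinuousLinearMap']

lemma t_apply_infty (a : A) : t a ∞ = ee (a : Bc) 0 := by
  simp [t, tlin, LinearMap.coe_toContinuousLinearMap']

lemma t_norm_le : ‖t‖ ≤ 1 := by
  apply ContinuousLinearMap.opNorm_le_bound _ zero_le_one
  intro a
  rw [one_mul]
  have hcoe : ‖a‖ = ‖phi (a : Bc)‖ := rfl
  rw [ContinuousMap.norm_le _ (norm_nonneg _)]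
  intro x
  induction x using OnePoint.rec with
  | infty =>
      rw [t_apply_infty, hcoe]
      have h2 : ee (a : Bc) 2 = 0 := a.2
      have : p (a : Bc) 0 = ee (a : Bc) 0 := by simp [p, h2]
      calc ‖ee (a : Bc) 0‖ = ‖phi (a : Bc) 0‖ := by rw [phi_apply, this]
        _ ≤ _ := BoundedContinuousFunction.norm_coe_le_norm _ 0
  | coe n =>
      rw [t_apply_coe, hcoe]
      have h2 : ee (a : Bc) 2 = 0 := a.2
      have : p (a : Bc) (n + 2) = ee (a : Bc) 0 * Real.cos (th n) + ee (a : Bc) 1 * Real.sin (th n) := by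
        simp [p, h2]
      calc ‖ee (a : Bc) 0 * Real.cos (th n) + ee (a : Bc) 1 * Real.sin (th n)‖
          = ‖phi (a : Bc) (n + 2)‖ := by rw [phi_apply, this]
        _ ≤ _ := BoundedContinuousFunction.norm_coe_le_norm _ _

/-- the gap below angle `n`. -/
def dl (n : ℕ) : ℝ := 1 / ((n+1)*(n+2))

lemma dl_pos (n : ℕ) : 0 < dl n := by rw [dl]; positivity

lemma dl_le_th (n : ℕ) : dl n ≤ th n := by
  rw [dl, th]
  apply one_div_le_one_div_of_le (by positivity)
  nlinarith [Nat.cast_nonneg (α := ℝ) n]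

lemma dl_le_one (n : ℕ) : dl n ≤ 1 := (dl_le_th n).trans (th_le_one n)

lemma th_sub_succ (n : ℕ) : th n - th (n+1) = dl n := by
  rw [th, th, dl]
  push_cast
  rw [div_sub_div _ _ (by positivity : ((n:ℝ)+1) ≠ 0) (by positivity : ((n:ℝ)+1+1) ≠ 0)]
  norm_num
  left; ring

lemma gap {m n : ℕ} (h : m ≠ n) : dl n ≤ |th n - th m| := by
  rcases lt_or_gt_of_ne h with hlt | hgt
  · -- m < n
    have hm1 : (m:ℝ) + 1 ≤ (n:ℝ) := by exact_mod_cast hlt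
    have hn0 : (0:ℝ) < (n:ℝ) := lt_of_lt_of_le (by positivity) hm1
    have h1 : 1/(n:ℝ) ≤ th m := by
      rw [th]
      exact one_div_le_one_div_of_le (by positivity) hm1
    have e1 : 1/(n:ℝ) - 1/((n:ℝ)+1) = 1/((n:ℝ)*((n:ℝ)+1)) := by
      rw [div_sub_div _ _ (ne_of_gt hn0) (by positivity)]
      norm_num
    have e2 : 1/(((n:ℝ)+1)*((n:ℝ)+2)) ≤ 1/((n:ℝ)*((n:ℝ)+1)) := by
      apply one_div_le_one_div_of_le (by positivity)
      nlinarith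
    have hth : th n ≤ th m := by
      rw [th, th]
      apply one_div_le_one_div_of_le (by positivity)
      have : (m:ℝ) ≤ (n:ℝ) := by linarith
      linarith
    rw [abs_sub_comm, abs_of_nonneg (by linarith)]
    have hthn : th n = 1/((n:ℝ)+1) := rfl
    have hdl : dl n = 1/(((n:ℝ)+1)*((n:ℝ)+2)) := rfl
    linarith
  · -- m > n
    have hm1 : (n:ℝ) + 2 ≤ (m:ℝ) + 1 := by
      have : n + 1 ≤ m := hgt
      have := (Nat.cast_le (α := ℝ)).mpr this
      push_cast at this ⊢
      linarith
    have hth : th m ≤ th (n+1) := by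
      rw [th, th]
      apply one_div_le_one_div_of_le (by positivity)
      push_cast
      linarith
    have hth2 : th m ≤ th n := hth.trans (by
      rw [th, th]
      apply one_div_le_one_div_of_le (by positivity)
      push_cast; linarith)
    rw [abs_of_nonneg (by linarith)]
    have := th_sub_succ n
    linarith

lemma pi_half_ge_one : (1:ℝ) ≤ π / 2 := by linarith [Real.pi_gt_three]

/-- The key forcing lemma. -/
lemma forced (T : Bc →L[ℝ] C(OnePoint ℕ, ℝ))
    (hTa : ∀ a : A, T (a : Bc) = t a) (hTn : ‖T‖ = ‖t‖) (n : ℕ) :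
    T (ee.symm ![0,0,1]) (n : OnePoint ℕ) = w n := by
  set g : C(OnePoint ℕ, ℝ) := T (ee.symm ![0,0,1]) with hg
  -- the uniform bound
  have hb : ∀ (b : Bc) (x : OnePoint ℕ), |T b x| ≤ ‖b‖ := by
    intro b x
    calc |T b x| = ‖T b x‖ := (Real.norm_eq_abs _).symm
      _ ≤ ‖T b‖ := ContinuousMap.norm_coe_le_norm _ _
      _ ≤ ‖T‖ * ‖b‖ := ContinuousLinearMap.le_opNorm _ _
      _ = ‖t‖ * ‖b‖ := by rw [hTn]
      _ ≤ 1 * ‖b‖ := mul_le_mul_of_nonneg_right t_norm_le (norm_nonneg _)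
      _ = ‖b‖ := one_mul _
  -- set up λ
  have hc : 0 < 1 - Real.cos (dl n) := by
    have : Real.cos (dl n) < Real.cos 0 :=
      Real.cos_lt_cos_of_nonneg_of_le_pi le_rfl
        ((dl_le_one n).trans (by linarith [Real.pi_gt_three])) (dl_pos n)
    rw [Real.cos_zero] at this
    linarith
  set lam : ℝ := 2 / (1 - Real.cos (dl n)) with hlam
  have hcos_dl_nonneg : 0 ≤ Real.cos (dl n) :=
    Real.cos_nonneg_of_mem_Icc ⟨by linarith [dl_pos n, Real.pi_gt_three],
      (dl_le_one n).trans pi_half_ge_one⟩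
  have hlam2 : 2 ≤ lam := by
    rw [hlam, le_div_iff₀ hc]
    nlinarith
  have hkey : ∀ Δ : ℝ, dl n ≤ |Δ| → |Δ| ≤ 1 → 2 ≤ lam * (1 - Real.cos Δ) := by
    intro Δ h1 h2
    have hcos : Real.cos Δ ≤ Real.cos (dl n) := by
      rw [← Real.cos_abs]
      exact Real.cos_le_cos_of_nonneg_of_le_pi (le_of_lt (dl_pos n))
        (h2.trans (by linarith [Real.pi_gt_three])) h1
    have hlampos : 0 < lam := by linarith
    calc (2:ℝ) = lam * (1 - Real.cos (dl n)) := by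
          rw [hlam]; field_simp
      _ ≤ lam * (1 - Real.cos Δ) := by nlinarith
  -- the two test vectors
  have main : ∀ σ : ℝ, σ = 1 ∨ σ = -1 →
      |σ * lam + g (n : OnePoint ℕ)| ≤ lam + σ * w n := by
    intro σ hσ
    have hσabs : |σ| = 1 := by rcases hσ with h | h <;> rw [h] <;> norm_num
    have hσsq : σ * σ = 1 := by rcases hσ with h | h <;> rw [h] <;> norm_num
    have hσwn : -1 ≤ σ * w n := by
      have : |σ * w n| = 1 := by rw [abs_mul, hσabs, w_abs, one_mul]
      linarith [(abs_le.mp (le_of_eq this)).1]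
    set b : Bc := ee.symm ![σ * lam * Real.cos (th n), σ * lam * Real.sin (th n), 1] with hbdef
    have hvb : ee b = ![σ * lam * Real.cos (th n), σ * lam * Real.sin (th n), 1] :=
      ee.apply_symm_apply _
    have hb0 : ee b 0 = σ * lam * Real.cos (th n) := by rw [hvb]; rfl
    have hb1 : ee b 1 = σ * lam * Real.sin (th n) := by rw [hvb]; rfl
    have hb2 : ee b 2 = 1 := by rw [hvb]; rfl
    -- norm estimate for b
    have hnb : ‖b‖ ≤ lam + σ * w n := by
      rw [norm_def, BoundedContinuousFunction.norm_le (by linarith)]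
      intro k
      rw [phi_apply, Real.norm_eq_abs]
      have hcn : 0 ≤ Real.cos (th n) := Real.cos_nonneg_of_mem_Icc
        ⟨by linarith [th_pos n, Real.pi_gt_three], (th_le_one n).trans pi_half_ge_one⟩
      have hcn1 : Real.cos (th n) ≤ 1 := Real.cos_le_one _
      have hkn : 2 ≤ lam * (1 - Real.cos (th n)) := by
        apply hkey
        · rw [abs_of_pos (th_pos n)]; exact dl_le_th n
        · rw [abs_of_pos (th_pos n)]; exact th_le_one n
      have habs01 : |σ * lam * Real.cos (th n)| = lam * Real.cos (th n) := by
        rw [abs_mul, abs_mul, hσabs, one_mul, abs_of_nonneg (by linarith : (0:ℝ) ≤ lam),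
          abs_of_nonneg hcn]
      match k with
      | 0 =>
          have : p b 0 = σ * lam * Real.cos (th n) + 1 := by simp [p, hb0, hb2]
          rw [this]
          have := abs_add_le (σ * lam * Real.cos (th n)) 1
          rw [abs_one] at this
          nlinarith [habs01]
      | 1 =>
          have : p b 1 = σ * lam * Real.cos (th n) - 1 := by simp [p, hb0, hb2]
          rw [this]
          have := abs_sub (σ * lam * Real.cos (th n)) 1
          rw [abs_one] at this
          nlinarith [habs01]
      | (m+2) =>
          have hval : p b (m+2) = σ * lam * Real.cos (th n - th m) + w m := by
            simp only [p, hb0, hb1, hb2, Real.cos_sub, mul_one]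
            ring
          rw [hval]
          rcases eq_or_ne m n with rfl | hm
          · rw [sub_self, Real.cos_zero, mul_one]
            have : σ * lam + w m = σ * (lam + σ * w m) := by
              rw [mul_add, ← mul_assoc, hσsq, one_mul]
            rw [this, abs_mul, hσabs, one_mul, abs_of_nonneg (by linarith)]
          · have hgap : dl n ≤ |th n - th m| := gap hm
            have habs : |th n - th m| ≤ 1 := by
              rw [abs_le]
              constructor <;> [linarith [th_pos n, th_le_one m]; linarith [th_pos m, th_le_one n]]
            have hkm := hkey _ hgap habs
            have hcΔ : 0 ≤ Real.cos (th n - th m) := by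
              rw [← Real.cos_abs]
              apply Real.cos_nonneg_of_mem_Icc
              constructor
              · linarith [abs_nonneg (th n - th m), Real.pi_gt_three]
              · exact habs.trans pi_half_ge_one
            have h1 : |σ * lam * Real.cos (th n - th m)| = lam * Real.cos (th n - th m) := by
              rw [abs_mul, abs_mul, hσabs, one_mul, abs_of_nonneg (by linarith : (0:ℝ) ≤ lam),
                abs_of_nonneg hcΔ]
            have h2 : |σ * lam * Real.cos (th n - th m) + w m|
                ≤ lam * Real.cos (th n - th m) + 1 := by
              have := abs_add_le (σ * lam * Real.cos (th n - th m)) (w m)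
              rw [w_abs] at this
              linarith [h1.le.trans (le_refl _), this, h1.ge]
            nlinarith
    -- b decomposes over A
    set a : Bc := ee.symm ![σ * lam * Real.cos (th n), σ * lam * Real.sin (th n), 0] with hadef
    have hva : ee a = ![σ * lam * Real.cos (th n), σ * lam * Real.sin (th n), 0] :=
      ee.apply_symm_apply _
    have ha : a ∈ A := by
      rw [mem_A, hva]; rfl
    have hsum : b = a + ee.symm ![0,0,1] := by
      rw [hbdef, hadef, ← map_add]
      congr 1
      funext i
      fin_cases i <;> simp
    have heval : T b (n : OnePoint ℕ) = σ * lam + g (n : OnePoint ℕ) := by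
      rw [hsum, map_add]
      have : T (a : Bc) = t ⟨a, ha⟩ := hTa ⟨a, ha⟩
      rw [ContinuousMap.add_apply, this, ← hg]
      congr 1
      rw [t_apply_coe]
      show ee a 0 * Real.cos (th n) + ee a 1 * Real.sin (th n) = σ * lam
      rw [hva]
      show σ * lam * Real.cos (th n) * Real.cos (th n)
          + σ * lam * Real.sin (th n) * Real.sin (th n) = σ * lam
      linear_combination (σ * lam) * Real.sin_sq_add_cos_sq (th n)
    calc |σ * lam + g (n : OnePoint ℕ)| = |T b (n : OnePoint ℕ)| := by rw [heval]
      _ ≤ ‖b‖ := hb b _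
      _ ≤ lam + σ * w n := hnb
  -- combine
  have h1 := main 1 (Or.inl rfl)
  have h2 := main (-1) (Or.inr rfl)
  rw [one_mul, one_mul] at h1
  rw [neg_one_mul, neg_one_mul] at h2
  have e1 := (abs_le.mp h1).2
  have e2 := (abs_le.mp h2).1
  have : g (n : OnePoint ℕ) = w n := by linarith
  exact this

theorem main_theorem :
    ∃ B : BanachSpace.{0}, FiniteDimensional ℝ B.carrier ∧
      ∃ (A' : Submodule ℝ B.carrier) (t' : A' →L[ℝ] C(OnePoint ℕ, ℝ)),
        ¬ ∃ T : B.carrier →L[ℝ] C(OnePoint ℕ, ℝ),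
            (∀ a : A', T (a : B.carrier) = t' a) ∧ ‖T‖ = ‖t'‖ := by
  refine ⟨⟨Bc⟩, inferInstance, A, t, ?_⟩
  rintro ⟨T, hTa, hTn⟩
  set g : C(OnePoint ℕ, ℝ) := T (ee.symm ![0,0,1]) with hg
  have key : ∀ n : ℕ, g (n : OnePoint ℕ) = w n := forced T hTa hTn
  have htend : Filter.Tendsto (fun k : ℕ => g (k : OnePoint ℕ)) atTop (nhds (g ∞)) :=
    (OnePoint.continuous_iff_from_nat (f := (g : OnePoint ℕ → ℝ))).mp g.continuous
  have h2k : Filter.Tendsto (fun k : ℕ => 2*k) atTop atTop :=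
    Filter.tendsto_atTop_atTop_of_monotone (fun a b h => by omega) (fun b => ⟨b, by omega⟩)
  have h2k1 : Filter.Tendsto (fun k : ℕ => 2*k+1) atTop atTop :=
    Filter.tendsto_atTop_atTop_of_monotone (fun a b h => by omega) (fun b => ⟨b, by omega⟩)
  have heven : g ∞ = 1 := by
    apply tendsto_nhds_unique (htend.comp h2k)
    have : ((fun k : ℕ => g (k : OnePoint ℕ)) ∘ (fun k : ℕ => 2*k)) = fun _ => (1:ℝ) := by
      funext k
      simp only [Function.comp_apply, key (2*k), w, pow_mul]
      norm_num
    rw [this]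
    exact tendsto_const_nhds
  have hodd : g ∞ = -1 := by
    apply tendsto_nhds_unique (htend.comp h2k1)
    have : ((fun k : ℕ => g (k : OnePoint ℕ)) ∘ (fun k : ℕ => 2*k+1)) = fun _ => (-1:ℝ) := by
      funext k
      simp only [Function.comp_apply, key (2*k+1), w, pow_succ, pow_mul]
      norm_num
    rw [this]
    exact tendsto_const_nhds
  rw [heven] at hodd
  norm_num at hodd

end

end LocInjC


/-- The space `c` of convergent sequences, realized as `C(ℕ∞, ℝ)`, the continuous functions
on the one-point compactification of `ℕ` with the supremum norm, is not locally
`1`-injective: some operator from a subspace of a finite-dimensional Banach space into `c`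
admits no equal-norm linear extension. -/
theorem spaceC_not_locallyInjective1 :
    ∃ B : BanachSpace.{0}, FiniteDimensional ℝ B.carrier ∧
      ∃ (A : Submodule ℝ B.carrier) (t : A →L[ℝ] C(OnePoint ℕ, ℝ)),
        ¬ ∃ T : B.carrier →L[ℝ] C(OnePoint ℕ, ℝ),
            (∀ a : A, T (a : B.carrier) = t a) ∧ ‖T‖ = ‖t‖ := by
  exact LocInjC.main_theorem
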